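/- Suppose μ = 0 and m < ℓ. Conversely, if (a*, R*) is a global minimizer of (a,R) ↦ ĝ(a,R,0), then (a*, R*, 0) is a global minimizer of ĝ over all (a, R, ρ). -/
import Mathlib


open Finset

theorem stmt14
    {F : Type*} [NormedAddCommGroup F] [InnerProductSpace ℝ F]
    (l m : ℕ) (hm : 1 ≤ m) (hml : m < l)
    (x : Fin l → F) (ν C D : ℝ) (hν : 0 < ν) (hC : 0 < C) (hD : 0 < D)
    (gHat : F → ℝ → ℝ → ℝ)
    (hgHat : ∀ a R ρ, gHat a R ρ =
      (ν/2) * (R^2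
        + C * ∑ i ∈ univ.filter (fun i : Fin l => (i : ℕ) < m),
            max (‖x i - a‖^2 - R^2) 0
        + D * ∑ i ∈ univ.filter (fun i : Fin l => m ≤ (i : ℕ)),
            max (R^2 + ρ^2 - ‖x i - a‖^2) 0))
    (aStar : F) (RStar : ℝ)
    (hmin : ∀ (a : F) (R : ℝ), gHat aStar RStar 0 ≤ gHat a R 0) :
    ∀ (a : F) (R ρ : ℝ), gHat aStar RStar 0 ≤ gHat a R ρ := by
  intro a R ρ
  refine le_trans (hmin a R) ?_
  rw [hgHat a R 0, hgHat a R ρ]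
  have hsum : ∑ i ∈ univ.filter (fun i : Fin l => m ≤ (i : ℕ)),
      max (R^2 + (0:ℝ)^2 - ‖x i - a‖^2) 0 ≤
      ∑ i ∈ univ.filter (fun i : Fin l => m ≤ (i : ℕ)),
      max (R^2 + ρ^2 - ‖x i - a‖^2) 0 := by
    apply Finset.sum_le_sum
    intro i _
    apply max_le_max _ le_rfl
    nlinarith [sq_nonneg ρ]
  have : (0:ℝ) < ν/2 := by linarith
  apply mul_le_mul_of_nonneg_left _ this.le
  have := mul_le_mul_of_nonneg_left hsum hD.le
  linarith
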